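/- Suppose s : Z² → R^{4,1} has a Moutard lift: there is ν : Z² → R \ {0} with μ = s/ν satisfying the discrete Moutard equation δμ_{ik} ∧ δμ_{jl} = 0 on every elementary quadrilateral, and define s* by the discrete Christoffel formula ds*_{ij} = (1/(ν_i ν_j)) ds_{ij}. If s* is well defined (the 1-form ω_{ij} = ds_{ij}/(ν_i ν_j) is closed around each quadrilateral), then on every elementary quadrilateral A(s, s*) = 0, i.e., s* is Königs dual to s. -/

import Mathlib

/-- The wedge product `v ∧ w`, valued in the exterior algebra `Λ V`. -/
noncomputable def wedge {V : Type*} [AddCommGroup V] [Module ℝ V] (v w : V) :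
    ExteriorAlgebra ℝ V :=
  ExteriorAlgebra.ι ℝ v * ExteriorAlgebra.ι ℝ w

/-- The mixed area of two nets on the elementary quadrilateral with lower-left
vertex `p`. -/
noncomputable def MA {V : Type*} [AddCommGroup V] [Module ℝ V]
    (f g : ℤ × ℤ → V) (p : ℤ × ℤ) : ExteriorAlgebra ℝ V :=
  (4 : ℝ)⁻¹ • (wedge (f (p.1 + 1, p.2 + 1) - f p) (g (p.1, p.2 + 1) - g (p.1 + 1, p.2)) +
    wedge (g (p.1 + 1, p.2 + 1) - g p) (f (p.1, p.2 + 1) - f (p.1 + 1, p.2)))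

/-- Two points of `ℤ²` are joined by an edge if they differ by a standard basis
vector. -/
def IsEdge (p p' : ℤ × ℤ) : Prop :=
  p' = (p.1 + 1, p.2) ∨ p' = (p.1, p.2 + 1)

section WedgeLemmas

variable {V : Type*} [AddCommGroup V] [Module ℝ V]

lemma wedge_add_left (x y z : V) : wedge (x + y) z = wedge x z + wedge y z := by
  simp [wedge, map_add, add_mul]

lemma wedge_add_right (x y z : V) : wedge x (y + z) = wedge x y + wedge x z := by
  simp [wedge, map_add, mul_add]

lemma wedge_sub_left (x y z : V) : wedge (x - y) z = wedge x z - wedge y z := by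
  simp [wedge, map_sub, sub_mul]

lemma wedge_sub_right (x y z : V) : wedge x (y - z) = wedge x y - wedge x z := by
  simp [wedge, map_sub, mul_sub]

lemma wedge_smul_left (r : ℝ) (x y : V) : wedge (r • x) y = r • wedge x y := by
  simp [wedge, map_smul, smul_mul_assoc]

lemma wedge_smul_right (r : ℝ) (x y : V) : wedge x (r • y) = r • wedge x y := by
  simp [wedge, map_smul, mul_smul_comm]

lemma wedge_self (x : V) : wedge x x = 0 := ExteriorAlgebra.ι_sq_zero x

lemma wedge_swap (x y : V) : wedge x y = - wedge y x :=
  eq_neg_of_add_eq_zero_left (ExteriorAlgebra.ι_add_mul_swap x y)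

lemma wedge_zero_left (y : V) : wedge 0 y = 0 := by simp [wedge]

/-- The key algebraic identity, valid for arbitrary vectors and scalars. -/
lemma key_identity (a b c d : V) (u v t : ℝ) :
    t • (wedge (c - a) ((u * t) • (d - a) - u • (b - a)) +
        wedge (u • (b - a) + v • (c - b)) (d - b))
      = (t + 1) • wedge (v • c - u • a) (t • d - b) +
        wedge ((u • (b - a) + v • (c - b)) -
          ((u * t) • (d - a) + (v * t) • (c - d))) (b + t • c) := by
  simp only [wedge_sub_left, wedge_sub_right, wedge_add_left, wedge_add_right,
    wedge_smul_left, wedge_smul_right, wedge_self]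
  simp only [wedge_swap b a, wedge_swap c a, wedge_swap c b, wedge_swap d a,
    wedge_swap d b, wedge_swap d c]
  module

end WedgeLemmas

/-- If `s` admits a Moutard lift `μ = s/ν` and `s*` is defined by the discrete
Christoffel formula `ds* = ds/(ν_i ν_j)`, then `A(s, s*) = 0` on every
elementary quadrilateral: `s*` is Königs dual to `s`. -/
theorem stmt19 {V : Type*} [AddCommGroup V] [Module ℝ V]
    (s s' : ℤ × ℤ → V) (ν : ℤ × ℤ → ℝ) (hν : ∀ p, ν p ≠ 0)
    (hMoutard : ∀ p : ℤ × ℤ,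
      wedge ((ν (p.1 + 1, p.2 + 1))⁻¹ • s (p.1 + 1, p.2 + 1) - (ν p)⁻¹ • s p)
        ((ν (p.1, p.2 + 1))⁻¹ • s (p.1, p.2 + 1) -
          (ν (p.1 + 1, p.2))⁻¹ • s (p.1 + 1, p.2)) = 0)
    (hChristoffel : ∀ p p', IsEdge p p' →
      s' p' - s' p = (ν p * ν p')⁻¹ • (s p' - s p)) :
    ∀ p, MA s s' p = 0 := by
  intro p
  set a := s p with ha
  set b := s (p.1 + 1, p.2) with hb
  set c := s (p.1 + 1, p.2 + 1) with hc
  set d := s (p.1, p.2 + 1) with hd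
  set α := ν p with hα
  set β := ν (p.1 + 1, p.2) with hβ
  set γ := ν (p.1 + 1, p.2 + 1) with hγ
  set δ := ν (p.1, p.2 + 1) with hδ
  have hα0 := hν p
  have hβ0 := hν (p.1 + 1, p.2)
  have hγ0 := hν (p.1 + 1, p.2 + 1)
  have hδ0 := hν (p.1, p.2 + 1)
  -- the four edge relations
  have h1 : s' (p.1 + 1, p.2) - s' p = (α * β)⁻¹ • (b - a) :=
    hChristoffel p (p.1 + 1, p.2) (Or.inl rfl)
  have h2 : s' (p.1 + 1, p.2 + 1) - s' (p.1 + 1, p.2) = (β * γ)⁻¹ • (c - b) :=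
    hChristoffel (p.1 + 1, p.2) (p.1 + 1, p.2 + 1) (Or.inr rfl)
  have h3 : s' (p.1, p.2 + 1) - s' p = (α * δ)⁻¹ • (d - a) :=
    hChristoffel p (p.1, p.2 + 1) (Or.inr rfl)
  have h4 : s' (p.1 + 1, p.2 + 1) - s' (p.1, p.2 + 1) = (δ * γ)⁻¹ • (c - d) :=
    hChristoffel (p.1, p.2 + 1) (p.1 + 1, p.2 + 1) (Or.inl rfl)
  set u : ℝ := (α * β)⁻¹ with hu
  set v : ℝ := (β * γ)⁻¹ with hv
  set t : ℝ := β / δ with ht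
  have ht0 : t ≠ 0 := div_ne_zero hβ0 hδ0
  have hw : (α * δ)⁻¹ = u * t := by
    field_simp [hu, ht]
    rw [hu, ht]
    have hb' : β ≠ 0 := hβ0
    have ha' : α ≠ 0 := hα0
    have hd' : δ ≠ 0 := hδ0
    field_simp
  have hz : (δ * γ)⁻¹ = v * t := by
    field_simp [hv, ht]
    rw [hv, ht]
    have hb' : β ≠ 0 := hβ0
    have hg' : γ ≠ 0 := hγ0
    have hd' : δ ≠ 0 := hδ0
    field_simp
  -- closedness of the dual 1-form
  have hC : u • (b - a) + v • (c - b) = (u * t) • (d - a) + (v * t) • (c - d) := by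
    rw [← hw, ← hz, ← h1, ← h2, ← h3, ← h4]
    abel
  -- the Moutard relation, rescaled
  have hM : wedge (v • c - u • a) (t • d - b) = 0 := by
    have hm := hMoutard p
    have e1 : v • c - u • a = β⁻¹ • (γ⁻¹ • c - α⁻¹ • a) := by
      rw [smul_sub, smul_smul, smul_smul, hv, hu]
      rw [mul_inv, mul_inv]
      ring_nf
    have e2 : t • d - b = β • (δ⁻¹ • d - β⁻¹ • b) := by
      rw [smul_sub, smul_smul, smul_smul, ht]
      rw [mul_inv_cancel₀ hβ0, one_smul, div_eq_mul_inv, mul_comm]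
    rw [e1, e2, wedge_smul_left, wedge_smul_right, hm, smul_zero, smul_zero]
  -- the diagonal differences of s'
  have hdiag1 : s' (p.1, p.2 + 1) - s' (p.1 + 1, p.2) = (u * t) • (d - a) - u • (b - a) := by
    rw [← hw, ← h1, ← h3]; abel
  have hdiag2 : s' (p.1 + 1, p.2 + 1) - s' p = u • (b - a) + v • (c - b) := by
    rw [← h1, ← h2]; abel
  -- conclude via the key identity
  have hN : wedge (c - a) ((u * t) • (d - a) - u • (b - a)) +
      wedge (u • (b - a) + v • (c - b)) (d - b) = 0 := by
    have hk := key_identity a b c d u v t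
    rw [hM, smul_zero, zero_add, sub_eq_zero.mpr hC, wedge_zero_left] at hk
    exact (smul_eq_zero.mp hk).resolve_left ht0
  rw [MA, hdiag1, hdiag2, ← ha, ← hb, ← hc, ← hd, hN, smul_zero]
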